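/- Let H be a Hermitian n×n complex matrix, J_1,…,J_M n×n complex matrices, λ_1,…,λ_M positive reals, c_1,…,c_M complex numbers with g = Σ_{l=1}^M λ_l |c_l|², and let S ⊆ ℂⁿ be a subspace such that: (i) H maps S into S; (ii) every ψ ∈ S satisfies J_l ψ = c_l ψ for all l and Γ ψ = g ψ. Then for every ψ₀ ∈ S and every t ∈ ℝ, exp(t𝓛)(ψ₀ψ₀ᴴ) = exp(−itH) · ψ₀ψ₀ᴴ · exp(itH). In particular, L_D evaluated on the time-evolved state exp(t𝓛)(ψ₀ψ₀ᴴ) vanishes for all t, so every pure state drawn from S undergoes purely unitary (decoherence-free) time evolution. -/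

import Mathlib

set_option maxHeartbeats 1000000
set_option synthInstance.maxHeartbeats 400000



open Matrix BigOperators

attribute [local instance] Matrix.linftyOpNormedAddCommGroup Matrix.linftyOpNormedRing
  Matrix.linftyOpNormedAlgebra

/-- The decoherence superoperator `L_D[ρ] = Σ_l λ_l (J_l ρ J_lᴴ − ½ J_lᴴ J_l ρ − ½ ρ J_lᴴ J_l)`. -/
noncomputable def LD {M n : ℕ} (J : Fin M → Matrix (Fin n) (Fin n) ℂ)
    (lam : Fin M → ℝ) (ρ : Matrix (Fin n) (Fin n) ℂ) : Matrix (Fin n) (Fin n) ℂ :=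
  ∑ l, (lam l : ℂ) • (J l * ρ * (J l)ᴴ
    - (1 / 2 : ℂ) • ((J l)ᴴ * J l * ρ) - (1 / 2 : ℂ) • (ρ * ((J l)ᴴ * J l)))

/-- The decoherence operator `Γ = Σ_l λ_l J_lᴴ J_l`. -/
noncomputable def Gam {M n : ℕ} (J : Fin M → Matrix (Fin n) (Fin n) ℂ)
    (lam : Fin M → ℝ) : Matrix (Fin n) (Fin n) ℂ :=
  ∑ l, (lam l : ℂ) • ((J l)ᴴ * J l)

/-- The Liouvillian `𝓛[ρ] = −i[H,ρ] + L_D[ρ]` as a continuous linear endomorphism of the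
space of `n×n` complex matrices (equipped with the `L∞`-operator norm). -/
noncomputable def Liou {M n : ℕ} (H : Matrix (Fin n) (Fin n) ℂ)
    (J : Fin M → Matrix (Fin n) (Fin n) ℂ) (lam : Fin M → ℝ) :
    Matrix (Fin n) (Fin n) ℂ →L[ℂ] Matrix (Fin n) (Fin n) ℂ :=
  LinearMap.toContinuousLinearMap
    ((-Complex.I) • (LinearMap.mulLeft ℂ H - LinearMap.mulRight ℂ H)
      + ∑ l, (lam l : ℂ) •
          ((LinearMap.mulRight ℂ (J l)ᴴ).comp (LinearMap.mulLeft ℂ (J l))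
            - (1 / 2 : ℂ) • LinearMap.mulLeft ℂ ((J l)ᴴ * J l)
            - (1 / 2 : ℂ) • LinearMap.mulRight ℂ ((J l)ᴴ * J l)))

/-- The Liouvillian indeed sends `ρ` to `−i[H,ρ] + L_D[ρ]`. -/
theorem Liou_apply {M n : ℕ} (H : Matrix (Fin n) (Fin n) ℂ)
    (J : Fin M → Matrix (Fin n) (Fin n) ℂ) (lam : Fin M → ℝ)
    (ρ : Matrix (Fin n) (Fin n) ℂ) :
    Liou H J lam ρ = (-Complex.I) • (H * ρ - ρ * H) + LD J lam ρ := by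
  simp [Liou, LD, LinearMap.mulLeft, LinearMap.mulRight]

/-- `exp(t𝓛)`, the exponential of the Liouvillian as a linear map. -/
noncomputable def expL {M n : ℕ} (H : Matrix (Fin n) (Fin n) ℂ)
    (J : Fin M → Matrix (Fin n) (Fin n) ℂ) (lam : Fin M → ℝ) (t : ℝ) :
    Matrix (Fin n) (Fin n) ℂ →L[ℂ] Matrix (Fin n) (Fin n) ℂ :=
  @NormedSpace.exp _ _ _ (@NonUnitalSeminormedRing.toIsTopologicalRing _
    ContinuousLinearMap.toNormedRing.toNonUnitalNormedRing.toNonUnitalSeminormedRing)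
    ((t : ℂ) • Liou H J lam)

/-- The matrix exponential `exp(−itH)`. -/
noncomputable def expM {n : ℕ} (H : Matrix (Fin n) (Fin n) ℂ) (t : ℝ) :
    Matrix (Fin n) (Fin n) ℂ :=
  NormedSpace.exp ((-(Complex.I * (t : ℂ))) • H)
noncomputable instance clmCS {n : ℕ} : @CompleteSpace (Matrix (Fin n) (Fin n) ℂ →L[ℂ] Matrix (Fin n) (Fin n) ℂ)
    ContinuousLinearMap.toNormedRing.toMetricSpace.toUniformSpace := by
  have hfd : FiniteDimensional ℂ (Matrix (Fin n) (Fin n) ℂ →L[ℂ] Matrix (Fin n) (Fin n) ℂ) :=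
    inferInstance
  exact @complete_of_proper _ ContinuousLinearMap.toNormedRing.toMetricSpace.toPseudoMetricSpace
    (@FiniteDimensional.proper ℂ _ _ ContinuousLinearMap.toNormedAddCommGroup
      ContinuousLinearMap.toNormedSpace _ hfd)

noncomputable instance clmNR {n : ℕ} :
    NormedRing (Matrix (Fin n) (Fin n) ℂ →L[ℂ] Matrix (Fin n) (Fin n) ℂ) :=
  ContinuousLinearMap.toNormedRing

noncomputable instance clmNA {n : ℕ} :
    NormedAlgebra ℂ (Matrix (Fin n) (Fin n) ℂ →L[ℂ] Matrix (Fin n) (Fin n) ℂ) :=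
  ContinuousLinearMap.toNormedAlgebra

noncomputable instance clmNQ {n : ℕ} :
    NormedAlgebra ℚ (Matrix (Fin n) (Fin n) ℂ →L[ℂ] Matrix (Fin n) (Fin n) ℂ) :=
  NormedAlgebra.restrictScalars ℚ ℂ _


instance clmTopRing {n : ℕ} :
    IsTopologicalRing (Matrix (Fin n) (Fin n) ℂ →L[ℂ] Matrix (Fin n) (Fin n) ℂ) :=
  @NonUnitalSeminormedRing.toIsTopologicalRing _
    ContinuousLinearMap.toNormedRing.toNonUnitalNormedRing.toNonUnitalSeminormedRing

namespace DFSaux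

variable {n : ℕ}

lemma exp_apply (T : Matrix (Fin n) (Fin n) ℂ →L[ℂ] Matrix (Fin n) (Fin n) ℂ)
    (v : Matrix (Fin n) (Fin n) ℂ) :
    NormedSpace.exp T v = ∑' k : ℕ, (k.factorial : ℂ)⁻¹ • (T ^ k) v := by
  have hs : Summable fun k : ℕ => (k.factorial : ℂ)⁻¹ • T ^ k :=
    NormedSpace.expSeries_summable' (𝕂 := ℂ) T
  have h := (ContinuousLinearMap.apply ℂ (Matrix (Fin n) (Fin n) ℂ) v).map_tsum hs
  rw [NormedSpace.exp_eq_tsum ℂ]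
  exact h.trans (tsum_congr fun k => rfl)

lemma summable_apply (T : Matrix (Fin n) (Fin n) ℂ →L[ℂ] Matrix (Fin n) (Fin n) ℂ)
    (v : Matrix (Fin n) (Fin n) ℂ) :
    Summable fun k : ℕ => (k.factorial : ℂ)⁻¹ • (T ^ k) v := by
  have hs : Summable fun k : ℕ => (k.factorial : ℂ)⁻¹ • T ^ k :=
    NormedSpace.expSeries_summable' (𝕂 := ℂ) T
  have := hs.map (ContinuousLinearMap.apply ℂ (Matrix (Fin n) (Fin n) ℂ) v).toLinearMap.toAddMonoidHom
    (ContinuousLinearMap.apply ℂ (Matrix (Fin n) (Fin n) ℂ) v).continuous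
  exact this

noncomputable def mulLM (X : Matrix (Fin n) (Fin n) ℂ) :
    Matrix (Fin n) (Fin n) ℂ →L[ℂ] Matrix (Fin n) (Fin n) ℂ :=
  LinearMap.toContinuousLinearMap (LinearMap.mulLeft ℂ X)

noncomputable def mulRM (X : Matrix (Fin n) (Fin n) ℂ) :
    Matrix (Fin n) (Fin n) ℂ →L[ℂ] Matrix (Fin n) (Fin n) ℂ :=
  LinearMap.toContinuousLinearMap (LinearMap.mulRight ℂ X)

@[simp]
lemma mulLM_apply (X ρ : Matrix (Fin n) (Fin n) ℂ) : mulLM X ρ = X * ρ := rfl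

@[simp]
lemma mulRM_apply (X ρ : Matrix (Fin n) (Fin n) ℂ) : mulRM X ρ = ρ * X := rfl

lemma pow_mulL (X : Matrix (Fin n) (Fin n) ℂ) (k : ℕ) (ρ : Matrix (Fin n) (Fin n) ℂ) :
    ((mulLM X) ^ k) ρ = X ^ k * ρ := by
  induction k with
  | zero => simp
  | succ k ih =>
      conv_lhs => rw [pow_succ']
      conv_rhs => rw [pow_succ']
      simp [ContinuousLinearMap.mul_apply, ih, mul_assoc]

lemma pow_mulR (X : Matrix (Fin n) (Fin n) ℂ) (k : ℕ) (ρ : Matrix (Fin n) (Fin n) ℂ) :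
    ((mulRM X) ^ k) ρ = ρ * X ^ k := by
  induction k generalizing ρ with
  | zero => simp
  | succ k ih =>
      conv_lhs => rw [pow_succ]
      conv_rhs => rw [pow_succ']
      simp [ContinuousLinearMap.mul_apply, ContinuousLinearMap.flip_apply, ih, mul_assoc]

lemma pow_smul_apply (a : ℂ) (T : Matrix (Fin n) (Fin n) ℂ →L[ℂ] Matrix (Fin n) (Fin n) ℂ)
    (k : ℕ) (v : Matrix (Fin n) (Fin n) ℂ) :
    ((a • T) ^ k) v = a ^ k • (T ^ k) v := by
  induction k generalizing v with
  | zero => simp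
  | succ k ih =>
      rw [pow_succ (a • T) k, pow_succ T k, pow_succ a k]
      rw [ContinuousLinearMap.mul_apply, ContinuousLinearMap.mul_apply,
        ContinuousLinearMap.smul_apply, _root_.map_smul, ih, smul_smul, mul_comm]

lemma exp_mulL (X : Matrix (Fin n) (Fin n) ℂ) :
    NormedSpace.exp (mulLM X) = mulLM (NormedSpace.exp X) := by
  refine ContinuousLinearMap.ext fun ρ => ?_
  rw [exp_apply]
  have hs : Summable fun k : ℕ => (k.factorial : ℂ)⁻¹ • X ^ k :=
    NormedSpace.expSeries_summable' (𝕂 := ℂ) X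
  have h := (mulRM ρ).map_tsum hs
  simp only [ContinuousLinearMap.mul_apply, ContinuousLinearMap.flip_apply, mulLM_apply,
    mulRM_apply] at h ⊢
  rw [NormedSpace.exp_eq_tsum ℂ]
  beta_reduce
  rw [h]
  exact tsum_congr fun k => by rw [pow_mulL, smul_mul_assoc]

lemma exp_mulR (X : Matrix (Fin n) (Fin n) ℂ) :
    NormedSpace.exp (mulRM X) = mulRM (NormedSpace.exp X) := by
  refine ContinuousLinearMap.ext fun ρ => ?_
  rw [exp_apply]
  have hs : Summable fun k : ℕ => (k.factorial : ℂ)⁻¹ • X ^ k :=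
    NormedSpace.expSeries_summable' (𝕂 := ℂ) X
  have h := (mulLM ρ).map_tsum hs
  simp only [ContinuousLinearMap.mul_apply, ContinuousLinearMap.flip_apply, mulLM_apply,
    mulRM_apply] at h ⊢
  rw [NormedSpace.exp_eq_tsum ℂ]
  beta_reduce
  rw [h]
  exact tsum_congr fun k => by rw [pow_mulR, mul_smul_comm]

noncomputable def W (S : Submodule ℂ (Fin n → ℂ)) : Submodule ℂ (Matrix (Fin n) (Fin n) ℂ) where
  carrier := {ρ | (∀ j, (fun i => ρ i j) ∈ S) ∧ (∀ i, (fun j => star (ρ i j)) ∈ S)}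
  add_mem' := by
    intro a b ha hb
    refine ⟨fun j => S.add_mem (ha.1 j) (hb.1 j), fun i => ?_⟩
    have e : (fun j => star ((a + b) i j))
        = (fun j => star (a i j)) + (fun j => star (b i j)) := by
      funext j; simp [Matrix.add_apply]
    rw [e]
    exact S.add_mem (ha.2 i) (hb.2 i)
  zero_mem' := by
    refine ⟨fun j => ?_, fun i => ?_⟩
    · have e : (fun i => (0 : Matrix (Fin n) (Fin n) ℂ) i j) = (0 : Fin n → ℂ) := by
        funext i; simp
      rw [e]; exact S.zero_mem
    · have e : (fun j => star ((0 : Matrix (Fin n) (Fin n) ℂ) i j)) = (0 : Fin n → ℂ) := by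
        funext j; simp
      rw [e]; exact S.zero_mem
  smul_mem' := by
    intro c ρ h
    refine ⟨fun j => S.smul_mem c (h.1 j), fun i => ?_⟩
    have e : (fun j => star ((c • ρ) i j)) = star c • (fun j => star (ρ i j)) := by
      funext j; simp [Matrix.smul_apply]
    rw [e]
    exact S.smul_mem (star c) (h.2 i)

lemma W_isClosed (S : Submodule ℂ (Fin n → ℂ)) :
    IsClosed (W S : Set (Matrix (Fin n) (Fin n) ℂ)) := by
  have hS : IsClosed (S : Set (Fin n → ℂ)) := S.closed_of_finiteDimensional
  have h1 : ∀ j : Fin n, Continuous fun ρ : Matrix (Fin n) (Fin n) ℂ => (fun i => ρ i j) := by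
    intro j
    exact ((LinearMap.funLeft ℂ ℂ (fun i : Fin n => (i, j))).comp
      ((LinearEquiv.curry ℂ ℂ (Fin n) (Fin n)).symm.toLinearMap)).continuous_of_finiteDimensional
  have h2 : ∀ i : Fin n, Continuous fun ρ : Matrix (Fin n) (Fin n) ℂ => (fun j => star (ρ i j)) := by
    intro i
    have : Continuous fun ρ : Matrix (Fin n) (Fin n) ℂ => (fun j => ρ i j) :=
      ((LinearMap.funLeft ℂ ℂ (fun j : Fin n => (i, j))).comp
        ((LinearEquiv.curry ℂ ℂ (Fin n) (Fin n)).symm.toLinearMap)).continuous_of_finiteDimensional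
    exact continuous_star.comp this
  have : (W S : Set (Matrix (Fin n) (Fin n) ℂ)) =
      (⋂ j, (fun ρ : Matrix (Fin n) (Fin n) ℂ => (fun i => ρ i j)) ⁻¹' S) ∩
      (⋂ i, (fun ρ : Matrix (Fin n) (Fin n) ℂ => (fun j => star (ρ i j))) ⁻¹' S) := by
    ext ρ
    simp [W, Set.mem_iInter]
  rw [this]
  exact ((isClosed_iInter fun j => hS.preimage (h1 j)).inter
    (isClosed_iInter fun i => hS.preimage (h2 i)))

lemma tsum_mem_of_closed {E : Type*} [NormedAddCommGroup E] [NormedSpace ℂ E]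
    (W : Submodule ℂ E) (hW : IsClosed (W : Set E)) {f : ℕ → E}
    (hf : Summable f) (h : ∀ k, f k ∈ W) : (∑' k, f k) ∈ W := by
  refine hW.mem_of_tendsto hf.hasSum (Filter.Eventually.of_forall fun s => ?_)
  exact Submodule.sum_mem W fun k _ => h k

end DFSaux

/-- Theorem (dynamically stable restricted DFS, sufficiency): if `S` is invariant under the
Hermitian `H` and every `ψ ∈ S` is a simultaneous eigenvector of all `J_l` (eigenvalues
`c_l`) and of `Γ` (eigenvalue `g = Σ_l λ_l |c_l|²`), then every pure state from `S` evolves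
unitarily: `exp(t𝓛)(ψ₀ψ₀ᴴ) = exp(−itH) ψ₀ψ₀ᴴ exp(itH)`, and `L_D` vanishes on the evolved
state for all `t`. -/
theorem stmt7 {M n : ℕ} (H : Matrix (Fin n) (Fin n) ℂ) (hH : H.IsHermitian)
    (J : Fin M → Matrix (Fin n) (Fin n) ℂ) (lam : Fin M → ℝ) (hlam : ∀ l, 0 < lam l)
    (c : Fin M → ℂ) (g : ℂ) (hg : g = ∑ l, ((lam l * Complex.normSq (c l) : ℝ) : ℂ))
    (S : Submodule ℂ (Fin n → ℂ))
    (hinv : ∀ ψ ∈ S, H.mulVec ψ ∈ S)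
    (heig : ∀ ψ ∈ S, (∀ l, (J l).mulVec ψ = c l • ψ) ∧ (Gam J lam).mulVec ψ = g • ψ) :
    ∀ ψ₀ ∈ S, ∀ t : ℝ,
      expL H J lam t (vecMulVec ψ₀ (star ψ₀))
          = expM H t * vecMulVec ψ₀ (star ψ₀) * expM H (-t)
      ∧ LD J lam (expL H J lam t (vecMulVec ψ₀ (star ψ₀))) = 0 := by
  intro ψ₀ hψ₀ t
  classical
  set ρ₀ : Matrix (Fin n) (Fin n) ℂ := vecMulVec ψ₀ (star ψ₀) with hρ₀def
  have hgre : star g = g := by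
    rw [hg]
    simp [star_sum, Complex.conj_ofReal]
  -- star-closedness of W
  have hWstar : ∀ ρ ∈ DFSaux.W S, ρᴴ ∈ DFSaux.W S := by
    intro ρ hρ
    refine ⟨fun j => ?_, fun i => ?_⟩
    · have e : (fun i => ρᴴ i j) = (fun i => star (ρ j i)) := by
        funext i; simp [Matrix.conjTranspose_apply]
      rw [e]; exact hρ.2 j
    · have e : (fun j => star (ρᴴ i j)) = (fun j => ρ j i) := by
        funext j; simp [Matrix.conjTranspose_apply]
      rw [e]; exact hρ.1 i
  -- eigen-relations on W
  have keyJ : ∀ ρ ∈ DFSaux.W S, ∀ l, J l * ρ = c l • ρ := by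
    intro ρ hρ l
    ext i j
    have h := congrFun ((heig _ (hρ.1 j)).1 l) i
    simpa [Matrix.mulVec, dotProduct, Matrix.mul_apply, Matrix.smul_apply] using h
  have keyG : ∀ ρ ∈ DFSaux.W S, Gam J lam * ρ = g • ρ := by
    intro ρ hρ
    ext i j
    have h := congrFun ((heig _ (hρ.1 j)).2) i
    simpa [Matrix.mulVec, dotProduct, Matrix.mul_apply, Matrix.smul_apply] using h
  have keyJr : ∀ ρ ∈ DFSaux.W S, ∀ l, ρ * (J l)ᴴ = star (c l) • ρ := by
    intro ρ hρ l
    have h := keyJ _ (hWstar ρ hρ) l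
    calc ρ * (J l)ᴴ = (J l * ρᴴ)ᴴ := by
          rw [Matrix.conjTranspose_mul, Matrix.conjTranspose_conjTranspose]
      _ = (c l • ρᴴ)ᴴ := by rw [h]
      _ = star (c l) • ρ := by
          rw [Matrix.conjTranspose_smul, Matrix.conjTranspose_conjTranspose]
  have hGamH : (Gam J lam)ᴴ = Gam J lam := by
    unfold Gam
    rw [Matrix.conjTranspose_sum]
    refine Finset.sum_congr rfl fun l _ => ?_
    rw [Matrix.conjTranspose_smul, Matrix.conjTranspose_mul, Matrix.conjTranspose_conjTranspose]
    simp [Complex.star_def, Complex.conj_ofReal]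
  have keyGr : ∀ ρ ∈ DFSaux.W S, ρ * Gam J lam = g • ρ := by
    intro ρ hρ
    have h := keyG _ (hWstar ρ hρ)
    calc ρ * Gam J lam = (Gam J lam * ρᴴ)ᴴ := by
          rw [Matrix.conjTranspose_mul, Matrix.conjTranspose_conjTranspose, hGamH]
      _ = (g • ρᴴ)ᴴ := by rw [h]
      _ = g • ρ := by
          rw [Matrix.conjTranspose_smul, Matrix.conjTranspose_conjTranspose, hgre]
  -- vanishing of LD on W
  have hLD0 : ∀ ρ ∈ DFSaux.W S, LD J lam ρ = 0 := by
    intro ρ hρ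
    have e1 : ∀ l, J l * ρ * (J l)ᴴ = ((Complex.normSq (c l) : ℝ) : ℂ) • ρ := by
      intro l
      rw [keyJ ρ hρ l, Matrix.smul_mul, keyJr ρ hρ l, smul_smul]
      simp [Complex.star_def, Complex.mul_conj]
    have step : LD J lam ρ
        = g • ρ - (1 / 2 : ℂ) • (Gam J lam * ρ) - (1 / 2 : ℂ) • (ρ * Gam J lam) := by
      unfold LD
      have : ∀ l : Fin M, (lam l : ℂ) • (J l * ρ * (J l)ᴴ
          - (1 / 2 : ℂ) • ((J l)ᴴ * J l * ρ) - (1 / 2 : ℂ) • (ρ * ((J l)ᴴ * J l)))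
          = ((lam l * Complex.normSq (c l) : ℝ) : ℂ) • ρ
            - (1 / 2 : ℂ) • ((lam l : ℂ) • ((J l)ᴴ * J l) * ρ)
            - (1 / 2 : ℂ) • (ρ * ((lam l : ℂ) • ((J l)ᴴ * J l))) := by
        intro l
        rw [e1 l]
        push_cast
        rw [smul_sub, smul_sub]
        rw [smul_smul, smul_comm ((lam l : ℂ)) ((1:ℂ)/2), smul_comm ((lam l : ℂ)) ((1:ℂ)/2)]
        rw [Matrix.smul_mul, Matrix.mul_smul]
      rw [Finset.sum_congr rfl fun l _ => this l]
      rw [Finset.sum_sub_distrib, Finset.sum_sub_distrib]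
      congr 1
      · congr 1
        · rw [← Finset.sum_smul, ← hg]
        · rw [← Finset.smul_sum, ← Finset.sum_mul]
          rfl
      · rw [← Finset.smul_sum, ← Finset.mul_sum]
        rfl
    rw [step, keyG ρ hρ, keyGr ρ hρ]
    module
  -- invariance of W under left/right multiplication by H
  have hWH : ∀ ρ ∈ DFSaux.W S, H * ρ ∈ DFSaux.W S ∧ ρ * H ∈ DFSaux.W S := by
    intro ρ hρ
    constructor
    · refine ⟨fun j => ?_, fun i => ?_⟩
      · have e : (fun i => (H * ρ) i j) = H.mulVec (fun i => ρ i j) := by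
          funext i; simp [Matrix.mul_apply, Matrix.mulVec, dotProduct]
        rw [e]; exact hinv _ (hρ.1 j)
      · have e : (fun j => star ((H * ρ) i j))
            = ∑ k, star (H i k) • (fun j => star (ρ k j)) := by
          funext j
          simp [Matrix.mul_apply, Finset.sum_apply, star_sum]
        rw [e]
        exact Submodule.sum_mem S fun k _ => S.smul_mem _ (hρ.2 k)
    · refine ⟨fun j => ?_, fun i => ?_⟩
      · have e : (fun i => (ρ * H) i j) = ∑ k, H k j • (fun i => ρ i k) := by
          funext i
          simp [Matrix.mul_apply, Finset.sum_apply, mul_comm]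
        rw [e]
        exact Submodule.sum_mem S fun k _ => S.smul_mem _ (hρ.1 k)
      · have e : (fun j => star ((ρ * H) i j)) = H.mulVec (fun k => star (ρ i k)) := by
          funext j
          have hHe : ∀ k, star (H k j) = H j k := by
            intro k
            conv_rhs => rw [← hH]
            simp [Matrix.conjTranspose_apply]
          simp only [Matrix.mul_apply, Matrix.mulVec, dotProduct, star_sum, star_mul']
          refine Finset.sum_congr rfl fun k _ => ?_
          rw [hHe k, mul_comm]
        rw [e]; exact hinv _ (hρ.2 i)
  have hρ₀W : ρ₀ ∈ DFSaux.W S := by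
    refine ⟨fun j => ?_, fun i => ?_⟩
    · have e : (fun i => ρ₀ i j) = star (ψ₀ j) • ψ₀ := by
        funext i; simp [hρ₀def, Matrix.vecMulVec_apply, mul_comm]
      rw [e]; exact S.smul_mem _ hψ₀
    · have e : (fun j => star (ρ₀ i j)) = star (ψ₀ i) • ψ₀ := by
        funext j; simp [hρ₀def, Matrix.vecMulVec_apply, mul_comm]
      rw [e]; exact S.smul_mem _ hψ₀
  -- the unitary generator
  set A : Matrix (Fin n) (Fin n) ℂ →L[ℂ] Matrix (Fin n) (Fin n) ℂ :=
    LinearMap.toContinuousLinearMap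
      ((-Complex.I) • (LinearMap.mulLeft ℂ H - LinearMap.mulRight ℂ H)) with hAdef
  have hAapp : ∀ ρ, A ρ = (-Complex.I) • (H * ρ - ρ * H) := by
    intro ρ
    rfl
  have hAW : ∀ ρ ∈ DFSaux.W S, A ρ ∈ DFSaux.W S := by
    intro ρ hρ
    rw [hAapp]
    exact Submodule.smul_mem _ _
      (Submodule.sub_mem _ (hWH ρ hρ).1 (hWH ρ hρ).2)
  have hLiouA : ∀ ρ ∈ DFSaux.W S, Liou H J lam ρ = A ρ := by
    intro ρ hρ
    rw [Liou_apply, hLD0 ρ hρ, add_zero, hAapp]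
  have hiter : ∀ k : ℕ, ((Liou H J lam) ^ k) ρ₀ ∈ DFSaux.W S
      ∧ ((Liou H J lam) ^ k) ρ₀ = (A ^ k) ρ₀ := by
    intro k
    induction k with
    | zero => exact ⟨by simpa using hρ₀W, by simp⟩
    | succ k ih =>
        constructor
        · rw [pow_succ', ContinuousLinearMap.mul_apply, hLiouA _ ih.1]
          exact hAW _ ih.1
        · rw [pow_succ', pow_succ', ContinuousLinearMap.mul_apply,
            ContinuousLinearMap.mul_apply, hLiouA _ ih.1, ih.2]
  -- series comparison
  have hmain : expL H J lam t ρ₀ = NormedSpace.exp ((t : ℂ) • A) ρ₀ := by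
    show NormedSpace.exp ((t : ℂ) • Liou H J lam) ρ₀ = _
    rw [DFSaux.exp_apply, DFSaux.exp_apply]
    refine tsum_congr fun k => ?_
    rw [DFSaux.pow_smul_apply, DFSaux.pow_smul_apply, (hiter k).2]
  -- conjugation identity
  have hsplit : (t : ℂ) • A
      = DFSaux.mulLM ((-(Complex.I * (t : ℂ))) • H)
        + DFSaux.mulRM ((Complex.I * (t : ℂ)) • H) := by
    refine ContinuousLinearMap.ext fun ρ => ?_
    rw [ContinuousLinearMap.smul_apply, ContinuousLinearMap.add_apply, hAapp,
      DFSaux.mulLM_apply, DFSaux.mulRM_apply, smul_mul_assoc, mul_smul_comm]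
    module
  have hcomm : Commute
      (DFSaux.mulLM ((-(Complex.I * (t : ℂ))) • H))
      (DFSaux.mulRM ((Complex.I * (t : ℂ)) • H)) := by
    refine ContinuousLinearMap.ext fun ρ => ?_
    simp [ContinuousLinearMap.mul_apply, ContinuousLinearMap.mul_apply',
      ContinuousLinearMap.flip_apply, mul_assoc]
  have h2 : expM H (-t) = NormedSpace.exp ((Complex.I * (t : ℂ)) • H) := by
    unfold expM
    congr 1
    push_cast
    ring_nf
  have hconj : NormedSpace.exp ((t : ℂ) • A) ρ₀ = expM H t * ρ₀ * expM H (-t) := by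
    rw [hsplit]
    erw [NormedSpace.exp_add_of_commute hcomm, DFSaux.exp_mulL, DFSaux.exp_mulR]
    change DFSaux.mulLM _ (DFSaux.mulRM _ ρ₀) = _
    rw [DFSaux.mulRM_apply, DFSaux.mulLM_apply, h2, expM,
      ← mul_assoc]
  refine ⟨hmain.trans hconj, ?_⟩
  have hexpW : expL H J lam t ρ₀ ∈ DFSaux.W S := by
    show NormedSpace.exp ((t : ℂ) • Liou H J lam) ρ₀ ∈ DFSaux.W S
    rw [DFSaux.exp_apply]
    refine DFSaux.tsum_mem_of_closed _ (DFSaux.W_isClosed S)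
      (DFSaux.summable_apply _ _) fun k => ?_
    refine Submodule.smul_mem _ _ ?_
    rw [DFSaux.pow_smul_apply]
    exact Submodule.smul_mem _ _ (hiter k).1
  exact hLD0 _ hexpW
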